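/- Let (X, μ) be a measure space, and suppose for each k ≥ 1 we have a nonnegative function f̂_k ∈ L^∞(X,μ) with ‖f̂_k‖_1 ≤ 2^{-k}, and a measurable set Ê_k ⊆ X on which a maximal operator satisfies M(f̂_k)(x) ≥ 2^k. Assume the Ê_k are independent events and ∑_k μ(Ê_k) = ∞. If M is monotone in the sense that M(g)(x) ≥ M(h)(x) whenever g ≥ h ≥ 0 pointwise, then f̂ := ∑_k f̂_k satisfies ‖f̂‖_1 ≤ 1 and M(f̂)(x) = ∞ for almost every x ∈ X. -/

import Mathlib

open MeasureTheory ENNReal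

/-- Given nonnegative functions `f k` (indexed so that the `k`-th one corresponds to
`f̂_{k+1}`) on a probability space with `‖f k‖₁ ≤ 2^{-(k+1)}`, each essentially bounded,
measurable sets `Ê k` on which a monotone maximal operator `M` satisfies
`M (f k) x ≥ 2^{k+1}`, with the `Ê k` independent and `∑ μ (Ê k) = ∞`, the sum
`f̂ = ∑ₖ f k` satisfies `‖f̂‖₁ ≤ 1` and `M f̂ = ∞` almost everywhere. -/
theorem maximal_blowup {X : Type*} [MeasurableSpace X] (μ : Measure X)
    [IsProbabilityMeasure μ]
    (M : (X → ℝ≥0∞) → X → ℝ≥0∞)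
    (hM : ∀ g h : X → ℝ≥0∞, (∀ x, g x ≤ h x) → ∀ x, M g x ≤ M h x)
    (f : ℕ → X → ℝ≥0∞) (hfmeas : ∀ k, Measurable (f k))
    (hfbdd : ∀ k, ∃ C : ℝ≥0∞, C < ⊤ ∧ ∀ᵐ x ∂μ, f k x ≤ C)
    (hf1 : ∀ k, ∫⁻ x, f k x ∂μ ≤ (1 / 2) ^ (k + 1))
    (E : ℕ → Set X) (hE : ∀ k, MeasurableSet (E k))
    (hME : ∀ k, ∀ x ∈ E k, (2 : ℝ≥0∞) ^ (k + 1) ≤ M (f k) x)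
    (hind : ∀ F : Finset ℕ, μ (⋂ k ∈ F, E k) = ∏ k ∈ F, μ (E k))
    (hsum : ∑' k, μ (E k) = ⊤) :
    (∫⁻ x, (∑' k, f k x) ∂μ ≤ 1) ∧ ∀ᵐ x ∂μ, M (fun y => ∑' k, f k y) x = ⊤ := by
  constructor
  · rw [lintegral_tsum fun k => (hfmeas k).aemeasurable]
    calc ∑' k, ∫⁻ x, f k x ∂μ ≤ ∑' k, ((1:ℝ≥0∞)/2) ^ (k+1) := ENNReal.tsum_le_tsum hf1
    _ = ∑' k, (1/2) * ((1:ℝ≥0∞)/2) ^ k := by simp [pow_succ, mul_comm]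
    _ = (1/2) * ∑' k, ((1:ℝ≥0∞)/2) ^ k := ENNReal.tsum_mul_left
    _ = 1 := by
        rw [ENNReal.tsum_geometric]
        simp [ENNReal.sub_half]
        norm_num [ENNReal.inv_mul_cancel]
  · have hindep : ProbabilityTheory.iIndepSet E μ :=
      (ProbabilityTheory.iIndepSet_iff_meas_biInter hE).2 hind
    have hlim := ProbabilityTheory.measure_limsup_eq_one hE hindep hsum
    have hae : ∀ᵐ x ∂μ, x ∈ Filter.limsup E Filter.atTop := by
      rw [MeasureTheory.ae_iff]
      have hms : MeasurableSet (Filter.limsup E Filter.atTop) :=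
        MeasurableSet.measurableSet_limsup fun n => hE n
      have : μ (Filter.limsup E Filter.atTop)ᶜ = 0 := by
        rw [measure_compl hms (measure_ne_top μ _), hlim, measure_univ]
        simp
      exact this
    filter_upwards [hae] with x hx
    rw [Filter.mem_limsup_iff_frequently_mem, Filter.frequently_atTop] at hx
    -- x belongs to E k for arbitrarily large k
    by_contra htop
    obtain ⟨n, hn⟩ := ENNReal.exists_nat_gt htop
    have h2n : (n : ℝ≥0∞) ≤ 2 ^ n := by
      calc (n : ℝ≥0∞) ≤ (2 ^ n : ℕ) := by exact_mod_cast Nat.cast_le.2 (Nat.lt_two_pow_self (n := n)).le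
      _ = 2 ^ n := by push_cast; ring
    have : (2:ℝ≥0∞) ^ n ≤ M (fun y => ∑' j, f j y) x := by
      obtain ⟨k, hk, hxk⟩ := hx n
      calc (2:ℝ≥0∞) ^ n ≤ 2 ^ (k+1) := pow_le_pow_right₀ one_le_two (by omega)
      _ ≤ M (f k) x := hME k x hxk
      _ ≤ M (fun y => ∑' j, f j y) x :=
        hM _ _ (fun y => ENNReal.le_tsum k) x
    exact absurd (le_trans h2n this) (not_le.2 hn)
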